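/- Let g ≥ 1 and let w be an element of the free group F_{2g} on 2g generators such that the presented group F_{2g}/⟪w⟫ (the quotient by the normal closure of w) is isomorphic to the genus-g surface group Π_g. Then w is not conjugate in F_{2g} to any element of a subgroup generated by a proper subset of the 2g free generators; equivalently, the cyclically reduced form of w contains every one of the 2g generators. -/

import Mathlib

open scoped commutatorElement

structure Heis where
  x : ZMod 2
  y : ZMod 2
  z : ZMod 2
deriving DecidableEq, Fintype

namespace Heis

instance : Mul Heis := ⟨fun p q => ⟨p.x + q.x, p.y + q.y, p.z + q.z + p.x * q.y⟩⟩
instance : One Heis := ⟨⟨0, 0, 0⟩⟩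
instance : Inv Heis := ⟨fun p => ⟨p.x, p.y, p.z + p.x * p.y⟩⟩

lemma mul_def (p q : Heis) : p * q = ⟨p.x + q.x, p.y + q.y, p.z + q.z + p.x * q.y⟩ := rfl
lemma inv_def (p : Heis) : p⁻¹ = ⟨p.x, p.y, p.z + p.x * p.y⟩ := rfl
lemma one_def : (1 : Heis) = ⟨0, 0, 0⟩ := rfl

instance : Group Heis where
  mul_assoc := by decide
  one_mul := by decide
  mul_one := by decide
  inv_mul_cancel := by decide

lemma commutator_eq (M N : Heis) : ⁅M, N⁆ = ⟨0, 0, M.x * N.y + N.x * M.y⟩ := by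
  revert M N; decide

@[ext] lemma ext' {p q : Heis} (h1 : p.x = q.x) (h2 : p.y = q.y) (h3 : p.z = q.z) : p = q := by
  cases p; cases q; simp_all

def p1 : Heis →* Multiplicative (ZMod 2) where
  toFun m := Multiplicative.ofAdd m.x
  map_one' := rfl
  map_mul' := fun _ _ => rfl

def p2 : Heis →* Multiplicative (ZMod 2) where
  toFun m := Multiplicative.ofAdd m.y
  map_one' := rfl
  map_mul' := fun _ _ => rfl

lemma prod_central (l : List Heis) (h : ∀ m ∈ l, m.x = 0 ∧ m.y = 0) :
    l.prod = ⟨0, 0, (l.map Heis.z).sum⟩ := by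
  induction l with
  | nil => rfl
  | cons a t ih =>
    obtain ⟨hx, hy⟩ := h a List.mem_cons_self
    rw [List.prod_cons, ih (fun m hm => h m (List.mem_cons_of_mem a hm)), mul_def]
    ext <;> simp [hx, hy]

/-- the subgroup `{x = 0, z = 0}`. -/
def Γ : Subgroup Heis where
  carrier := {m | m.x = 0 ∧ m.z = 0}
  one_mem' := ⟨rfl, rfl⟩
  mul_mem' := by
    rintro a b ⟨ha1, ha2⟩ ⟨hb1, hb2⟩
    exact ⟨by simp [mul_def, ha1, hb1], by simp [mul_def, ha1, ha2, hb1, hb2]⟩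
  inv_mem' := by
    rintro a ⟨h1, h2⟩
    exact ⟨by simp [inv_def, h1], by simp [inv_def, h1, h2]⟩

end Heis

/-- The generator `aᵢ` of the surface group, in the free group on `2g` generators. -/
def sgenA (g : ℕ) (i : Fin g) : FreeGroup (Fin (2 * g)) :=
  FreeGroup.of ⟨2 * (i : ℕ), by have := i.isLt; omega⟩

/-- The generator `bᵢ` of the surface group. -/
def sgenB (g : ℕ) (i : Fin g) : FreeGroup (Fin (2 * g)) :=
  FreeGroup.of ⟨2 * (i : ℕ) + 1, by have := i.isLt; omega⟩

/-- The genus-`g` surface group `Π_g`, presented with generators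
`a₁, b₁, …, a_g, b_g` and the single relator `[a₁,b₁]⋯[a_g,b_g]`. -/
def SurfaceGroup (g : ℕ) : Type :=
  PresentedGroup ({(List.ofFn fun i : Fin g => ⁅sgenA g i, sgenB g i⁆).prod} :
    Set (FreeGroup (Fin (2 * g))))

instance (g : ℕ) : Group (SurfaceGroup g) :=
  inferInstanceAs (Group (PresentedGroup _))

set_option maxHeartbeats 1000000 in
theorem stmt_11 (g : ℕ) (hg : 1 ≤ g) (w : FreeGroup (Fin (2 * g)))
    (hiso : Nonempty
      (PresentedGroup ({w} : Set (FreeGroup (Fin (2 * g)))) ≃* SurfaceGroup g)) :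
    ∀ S : Set (Fin (2 * g)), S ≠ Set.univ →
      ∀ u : FreeGroup (Fin (2 * g)),
        u * w * u⁻¹ ∉ Subgroup.closure (FreeGroup.of '' S) := by
  intro S hS u hmem
  obtain ⟨i, hi⟩ := Set.ne_univ_iff_exists_notMem S |>.mp hS
  set rels : Set (FreeGroup (Fin (2 * g))) :=
    {(List.ofFn fun i : Fin g => ⁅sgenA g i, sgenB g i⁆).prod} with hrels
  have e : PresentedGroup ({w} : Set (FreeGroup (Fin (2 * g)))) ≃* PresentedGroup rels :=
    hiso.some
  -- the hom to F₂ dual to generator i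
  set f₁ : Fin (2 * g) → Multiplicative (ZMod 2) :=
    (fun l => Multiplicative.ofAdd (if l = i then 1 else 0)) with hf₁
  have hclos1 : ∀ x ∈ Subgroup.closure (FreeGroup.of '' S), FreeGroup.lift f₁ x = 1 := by
    intro x hx
    have hle : Subgroup.closure (FreeGroup.of '' S) ≤ MonoidHom.ker (FreeGroup.lift f₁) := by
      rw [Subgroup.closure_le]
      rintro _ ⟨l, hl, rfl⟩
      have : l ≠ i := fun h => hi (h ▸ hl)
      simp [MonoidHom.mem_ker, hf₁, this]
    exact hle hx
  have hwkill : ∀ r ∈ ({w} : Set (FreeGroup (Fin (2 * g)))), FreeGroup.lift f₁ r = 1 := by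
    intro r hr
    rw [Set.mem_singleton_iff.mp hr]
    have hv : FreeGroup.lift f₁ (u * w * u⁻¹) = 1 := hclos1 _ hmem
    have h2 : FreeGroup.lift f₁ u * FreeGroup.lift f₁ w * (FreeGroup.lift f₁ u)⁻¹ = 1 := by
      simpa using hv
    rwa [conj_eq_one_iff] at h2
  set φP : PresentedGroup ({w} : Set (FreeGroup (Fin (2 * g)))) →* Multiplicative (ZMod 2) :=
    PresentedGroup.toGroup hwkill with hφP
  set φQ : PresentedGroup rels →* Multiplicative (ZMod 2) :=
    φP.comp e.symm.toMonoidHom with hφQ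
  set c : Fin (2 * g) → ZMod 2 :=
    (fun l => Multiplicative.toAdd (φQ (PresentedGroup.of l))) with hc
  -- find a generator on which φQ is nonzero
  have hj : ∃ j : Fin (2 * g), c j ≠ 0 := by
    by_contra hcon
    push_neg at hcon
    have hφQ1 : φQ = 1 := by
      ext l
      have := hcon l
      rw [hc] at this
      simpa using congrArg Multiplicative.ofAdd this
    have h1 : φP (PresentedGroup.of i) = 1 := by
      have : φP (PresentedGroup.of i) = φQ (e (PresentedGroup.of i)) := by
        rw [hφQ]; simp
      rw [this, hφQ1]; rfl
    rw [hφP, PresentedGroup.toGroup.of] at h1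
    simp [hf₁] at h1
  obtain ⟨j, hj⟩ := hj
  have hj2 : (j : ℕ) < 2 * g := j.isLt
  -- the partner generator
  set j' : Fin (2 * g) :=
    (if h : (j : ℕ) % 2 = 0 then ⟨(j : ℕ) + 1, by omega⟩ else ⟨(j : ℕ) - 1, by omega⟩) with hj'
  set f₂ : Fin (2 * g) → ZMod 2 := (fun l => if l = j' then 1 else 0) with hf₂
  have hrelkill : ∀ r ∈ rels, FreeGroup.lift (fun l => Multiplicative.ofAdd (f₂ l)) r = 1 := by
    intro r hr
    rw [Set.mem_singleton_iff.mp hr]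
    rw [map_list_prod, List.map_ofFn]
    apply List.prod_eq_one
    intro x hx
    rw [List.mem_ofFn] at hx
    obtain ⟨k, rfl⟩ := hx
    simp only [Function.comp_apply, map_commutatorElement]
    exact commutatorElement_eq_one_iff_commute.mpr (mul_comm _ _)
  set ψQ : PresentedGroup rels →* Multiplicative (ZMod 2) :=
    PresentedGroup.toGroup hrelkill with hψQ
  set q : Fin (2 * g) → ZMod 2 :=
    (fun l => Multiplicative.toAdd (ψQ (e (PresentedGroup.of l)))) with hq
  -- the Heisenberg lift on the w-side
  set Θgen : Fin (2 * g) → Heis :=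
    (fun l => ⟨if l = i then 1 else 0, q l, 0⟩) with hΘgen
  have hmkw : PresentedGroup.mk ({w} : Set (FreeGroup (Fin (2 * g)))) w = 1 :=
    (QuotientGroup.eq_one_iff w).mpr (Subgroup.subset_normalClosure (Set.mem_singleton w))
  have hmkv : PresentedGroup.mk ({w} : Set (FreeGroup (Fin (2 * g)))) (u * w * u⁻¹) = 1 := by
    simp [map_mul, hmkw]
  have hy : Heis.p2.comp (FreeGroup.lift Θgen)
      = ψQ.comp (e.toMonoidHom.comp (PresentedGroup.mk _)) := by
    apply FreeGroup.ext_hom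
    intro a
    simp only [MonoidHom.comp_apply, FreeGroup.lift_apply_of]
    show Multiplicative.ofAdd (q a) = ψQ (e (PresentedGroup.of a))
    rw [hq]; simp
  have hΘv1 : FreeGroup.lift Θgen (u * w * u⁻¹) = 1 := by
    have hmem2 : FreeGroup.lift Θgen (u * w * u⁻¹) ∈ Heis.Γ := by
      have hle : Subgroup.closure (FreeGroup.of '' S)
          ≤ Heis.Γ.comap (FreeGroup.lift Θgen) := by
        rw [Subgroup.closure_le]
        rintro _ ⟨l, hl, rfl⟩
        have hne : l ≠ i := fun h => hi (h ▸ hl)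
        simp only [Set.mem_preimage, SetLike.mem_coe, Subgroup.mem_comap, FreeGroup.lift_apply_of]
        exact ⟨by simp [hΘgen, hne], by simp [hΘgen]⟩
      exact hle hmem
    have hyv : (FreeGroup.lift Θgen (u * w * u⁻¹)).y = 0 := by
      have := congrArg (fun (f : FreeGroup (Fin (2 * g)) →* Multiplicative (ZMod 2)) =>
        f (u * w * u⁻¹)) hy
      simp only [MonoidHom.comp_apply] at this
      rw [hmkv] at this
      simp only [map_one] at this
      have : Multiplicative.ofAdd (FreeGroup.lift Θgen (u * w * u⁻¹)).y = 1 := this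
      simpa using congrArg Multiplicative.toAdd this
    obtain ⟨hxv, hzv⟩ := hmem2
    exact Heis.ext' hxv hyv hzv
  have hΘwkill : ∀ r ∈ ({w} : Set (FreeGroup (Fin (2 * g)))), FreeGroup.lift Θgen r = 1 := by
    intro r hr
    rw [Set.mem_singleton_iff.mp hr]
    have h2 : FreeGroup.lift Θgen u * FreeGroup.lift Θgen w * (FreeGroup.lift Θgen u)⁻¹ = 1 := by
      simpa using hΘv1
    rwa [conj_eq_one_iff] at h2
  set ΘP : PresentedGroup ({w} : Set (FreeGroup (Fin (2 * g)))) →* Heis :=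
    PresentedGroup.toGroup hΘwkill with hΘP
  set ΘQ : PresentedGroup rels →* Heis := ΘP.comp e.symm.toMonoidHom with hΘQ
  -- components of ΘQ
  have hcomp1 : Heis.p1.comp ΘP = φP := by
    ext l
    rw [hΘP, hφP]
    simp only [MonoidHom.comp_apply, PresentedGroup.toGroup.of]
    rfl
  have hcomp2 : Heis.p2.comp ΘP = ψQ.comp e.toMonoidHom := by
    ext l
    rw [hΘP]
    simp only [MonoidHom.comp_apply, PresentedGroup.toGroup.of, MulEquiv.coe_toMonoidHom]
    show Multiplicative.ofAdd (q l) = ψQ (e (PresentedGroup.of l))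
    rw [hq]; simp
  have hMx : ∀ l : Fin (2 * g), (ΘQ (PresentedGroup.of l)).x = c l := by
    intro l
    have : Heis.p1 (ΘP (e.symm (PresentedGroup.of l))) = φP (e.symm (PresentedGroup.of l)) := by
      rw [← MonoidHom.comp_apply, hcomp1]
    have h2 : Multiplicative.ofAdd (ΘQ (PresentedGroup.of l)).x = φQ (PresentedGroup.of l) := by
      rw [hΘQ, hφQ]; exact this
    rw [hc]
    simpa using congrArg Multiplicative.toAdd h2
  have hMy : ∀ l : Fin (2 * g), (ΘQ (PresentedGroup.of l)).y = f₂ l := by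
    intro l
    have h1 : Heis.p2 (ΘP (e.symm (PresentedGroup.of l)))
        = ψQ (e (e.symm (PresentedGroup.of l))) := by
      rw [← MonoidHom.comp_apply, hcomp2]; rfl
    rw [e.apply_symm_apply] at h1
    have h2 : Multiplicative.ofAdd (ΘQ (PresentedGroup.of l)).y
        = Multiplicative.ofAdd (f₂ l) := by
      rw [hΘQ]
      show Heis.p2 (ΘP (e.symm (PresentedGroup.of l))) = _
      rw [h1, hψQ, PresentedGroup.toGroup.of]
    simpa using congrArg Multiplicative.toAdd h2
  -- evaluate ΘQ on the surface relator
  have hmkrel : PresentedGroup.mk rels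
      ((List.ofFn fun k : Fin g => ⁅sgenA g k, sgenB g k⁆).prod) = 1 :=
    (QuotientGroup.eq_one_iff _).mpr (Subgroup.subset_normalClosure (by rw [hrels]; rfl))
  have hz : (0 : ZMod 2) = (List.ofFn fun k : Fin g =>
      c ⟨2 * (k : ℕ), by have := k.isLt; omega⟩ * f₂ ⟨2 * (k : ℕ) + 1, by have := k.isLt; omega⟩
      + c ⟨2 * (k : ℕ) + 1, by have := k.isLt; omega⟩
        * f₂ ⟨2 * (k : ℕ), by have := k.isLt; omega⟩).sum := by
    have heval : ΘQ (PresentedGroup.mk rels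
        ((List.ofFn fun k : Fin g => ⁅sgenA g k, sgenB g k⁆).prod)) = 1 := by
      rw [hmkrel, map_one]
    rw [map_list_prod, map_list_prod, List.map_ofFn, List.map_ofFn] at heval
    have hfact : ((ΘQ.comp (PresentedGroup.mk rels)) ∘ fun k : Fin g => ⁅sgenA g k, sgenB g k⁆)
        = fun k : Fin g => (⟨0, 0,
          c ⟨2 * (k : ℕ), by have := k.isLt; omega⟩
            * f₂ ⟨2 * (k : ℕ) + 1, by have := k.isLt; omega⟩
          + c ⟨2 * (k : ℕ) + 1, by have := k.isLt; omega⟩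
            * f₂ ⟨2 * (k : ℕ), by have := k.isLt; omega⟩⟩ : Heis) := by
      funext k
      simp only [Function.comp_apply, map_commutatorElement]
      have hA : (ΘQ.comp (PresentedGroup.mk rels)) (sgenA g k)
          = ΘQ (PresentedGroup.of ⟨2 * (k : ℕ), by have := k.isLt; omega⟩) := rfl
      have hB : (ΘQ.comp (PresentedGroup.mk rels)) (sgenB g k)
          = ΘQ (PresentedGroup.of ⟨2 * (k : ℕ) + 1, by have := k.isLt; omega⟩) := rfl
      rw [hA, hB, Heis.commutator_eq, hMx, hMy, hMx, hMy]
    have hfact2 : (ΘQ ∘ ((PresentedGroup.mk rels) ∘ fun k : Fin g => ⁅sgenA g k, sgenB g k⁆))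
        = fun k : Fin g => (⟨0, 0,
          c ⟨2 * (k : ℕ), by have := k.isLt; omega⟩
            * f₂ ⟨2 * (k : ℕ) + 1, by have := k.isLt; omega⟩
          + c ⟨2 * (k : ℕ) + 1, by have := k.isLt; omega⟩
            * f₂ ⟨2 * (k : ℕ), by have := k.isLt; omega⟩⟩ : Heis) := by
      funext k
      exact congrFun hfact k
    rw [hfact2, Heis.prod_central, List.map_ofFn] at heval
    · have hzz := congrArg Heis.z heval
      exact hzz.symm
    · intro m hm
      rw [List.mem_ofFn] at hm
      obtain ⟨k, rfl⟩ := hm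
      exact ⟨rfl, rfl⟩
  -- evaluate the sum
  rw [List.sum_ofFn] at hz
  set k₀ : Fin g := ⟨(j : ℕ) / 2, by omega⟩ with hk₀
  have hk₀val : (k₀ : ℕ) = (j : ℕ) / 2 := by rw [hk₀]
  by_cases hpar : (j : ℕ) % 2 = 0
  · -- j is an `a` generator, partner is the `b` generator
    have hj'val : (j' : ℕ) = (j : ℕ) + 1 := by rw [hj', dif_pos hpar]
    have hnej : j ≠ j' := by
      intro h
      have := congrArg Fin.val h
      omega
    rw [Finset.sum_eq_single k₀] at hz
    · have h1 : ((⟨2 * ((k₀ : Fin g) : ℕ) + 1, by have := k₀.isLt; omega⟩ : Fin (2 * g))) = j' := by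
        apply Fin.ext
        rw [Fin.val_mk, hj'val]
        omega
      have h2 : ((⟨2 * ((k₀ : Fin g) : ℕ), by have := k₀.isLt; omega⟩ : Fin (2 * g))) = j := by
        apply Fin.ext
        rw [Fin.val_mk]
        omega
      rw [h2] at hz
      rw [hf₂] at hz
      simp only [if_pos h1, if_neg hnej, mul_one, mul_zero, add_zero] at hz
      exact hj hz.symm
    · intro a _ ha
      have hb : ((⟨2 * (a : ℕ) + 1, by have := a.isLt; omega⟩ : Fin (2 * g))) ≠ j' := by
        intro h
        have hvv := congrArg Fin.val h
        rw [Fin.val_mk, hj'val] at hvv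
        apply ha
        apply Fin.ext
        omega
      have hc2 : ((⟨2 * (a : ℕ), by have := a.isLt; omega⟩ : Fin (2 * g))) ≠ j' := by
        intro h
        have hvv := congrArg Fin.val h
        rw [Fin.val_mk, hj'val] at hvv
        omega
      rw [hf₂]
      simp only [if_neg hb, if_neg hc2, mul_zero, add_zero]
    · intro h
      exact absurd (Finset.mem_univ k₀) h
  · -- j is a `b` generator, partner is the `a` generator
    have hpar' : (j : ℕ) % 2 = 1 := Nat.mod_two_eq_zero_or_one (j : ℕ) |>.resolve_left hpar
    have hj'val : (j' : ℕ) = (j : ℕ) - 1 := by rw [hj', dif_neg hpar]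
    have hnej : j ≠ j' := by
      intro h
      have := congrArg Fin.val h
      omega
    rw [Finset.sum_eq_single k₀] at hz
    · have h1 : ((⟨2 * ((k₀ : Fin g) : ℕ), by have := k₀.isLt; omega⟩ : Fin (2 * g))) = j' := by
        apply Fin.ext
        rw [Fin.val_mk, hj'val]
        omega
      have h2 : ((⟨2 * ((k₀ : Fin g) : ℕ) + 1, by have := k₀.isLt; omega⟩ : Fin (2 * g))) = j := by
        apply Fin.ext
        rw [Fin.val_mk]
        omega
      rw [h2] at hz
      rw [hf₂] at hz
      simp only [if_pos h1, if_neg hnej, mul_one, mul_zero, zero_add] at hz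
      exact hj hz.symm
    · intro a _ ha
      have hb : ((⟨2 * (a : ℕ) + 1, by have := a.isLt; omega⟩ : Fin (2 * g))) ≠ j' := by
        intro h
        have hvv := congrArg Fin.val h
        rw [Fin.val_mk, hj'val] at hvv
        omega
      have hc2 : ((⟨2 * (a : ℕ), by have := a.isLt; omega⟩ : Fin (2 * g))) ≠ j' := by
        intro h
        have hvv := congrArg Fin.val h
        rw [Fin.val_mk, hj'val] at hvv
        apply ha
        apply Fin.ext
        omega
      rw [hf₂]
      simp only [if_neg hb, if_neg hc2, mul_zero, add_zero]
    · intro h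
      exact absurd (Finset.mem_univ k₀) h
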